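/- There exists a constant C > 0 such that for every bounded measurable f : [0,1] → ℝ, every t ∈ (0,1] and all x, x' ∈ [0,1], |P_t f(x) − P_t f(x')| ≤ C t^{-1/2} ‖f‖_∞ |x − x'| (smoothing estimate for the Neumann heat semigroup). -/

import Mathlib

open MeasureTheory Real Set

/-- Centered Gaussian density with variance `t`. -/
noncomputable def gaussD (t x : ℝ) : ℝ :=
  (2 * Real.pi * t) ^ (-(1:ℝ)/2) * Real.exp (-x ^ 2 / (2 * t))

/-- The Neumann heat kernel on `[0,1]` (transition density of reflected BM). -/
noncomputable def heatK (t x y : ℝ) : ℝ :=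
  ∑' n : ℤ, (gaussD t (x - y + 2 * (n : ℝ)) + gaussD t (x + y + 2 * (n : ℝ)))

/-- The Neumann heat semigroup: `P_t f(x) = ∫₀¹ p(t,x,y) f(y) dy` for `t > 0`,
and `P_0 f = f`. -/
noncomputable def Pt (t : ℝ) (f : ℝ → ℝ) (x : ℝ) : ℝ :=
  if t = 0 then f x else ∫ y in (0:ℝ)..1, heatK t x y * f y

/-- Fold a real number into `[0,1]` (distance to the nearest even integer). -/
noncomputable def fold (z : ℝ) : ℝ := 1 - |z - 2 * ⌊z / 2⌋ - 1|

lemma fold_mem (z : ℝ) : fold z ∈ Icc (0:ℝ) 1 := by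
  have h1 : ((⌊z / 2⌋ : ℝ)) ≤ z / 2 := Int.floor_le _
  have h2 : z / 2 < ⌊z / 2⌋ + 1 := Int.lt_floor_add_one _
  have h3 : |z - 2 * ⌊z / 2⌋ - 1| ≤ 1 := abs_le.mpr ⟨by linarith, by linarith⟩
  have h4 : (0:ℝ) ≤ |z - 2 * ⌊z / 2⌋ - 1| := abs_nonneg _
  constructor <;> simp only [fold] <;> linarith

lemma fold_add_two_int (z : ℝ) (n : ℤ) : fold (z + 2 * n) = fold z := by
  unfold fold
  rw [show (z + 2 * (n:ℝ)) / 2 = z / 2 + n by ring, Int.floor_add_intCast]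
  congr 2
  push_cast
  ring

lemma fold_neg (z : ℝ) : fold (-z) = fold z := by
  by_cases h : ((⌊z / 2⌋ : ℝ)) = z / 2
  · have hz : z = 2 * (⌊z / 2⌋ : ℝ) := by linarith
    have hfl : ⌊-z / 2⌋ = -⌊z / 2⌋ := by
      rw [show -z / 2 = ((-⌊z / 2⌋ : ℤ) : ℝ) by push_cast; linarith, Int.floor_intCast]
    unfold fold
    rw [hfl]
    push_cast
    rw [show -z - 2 * (-(⌊z / 2⌋:ℝ)) - 1 = z - 2 * (⌊z / 2⌋:ℝ) - 1 by linarith]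
  · have h1 : ((⌊z / 2⌋ : ℝ)) < z / 2 := lt_of_le_of_ne (Int.floor_le _) h
    have h2 : z / 2 < ⌊z / 2⌋ + 1 := Int.lt_floor_add_one _
    have hfl : ⌊-z / 2⌋ = -⌊z / 2⌋ - 1 := by
      apply Int.floor_eq_iff.mpr
      constructor
      · push_cast; linarith
      · push_cast; linarith
    unfold fold
    rw [hfl]
    push_cast
    rw [show -z - 2 * ((-(⌊z / 2⌋:ℝ)) - 1) - 1 = -(z - 2 * (⌊z / 2⌋:ℝ) - 1) by ring, abs_neg]

lemma fold_eq_self {y : ℝ} (hy : y ∈ Icc (0:ℝ) 1) : fold y = y := by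
  have h0 : ⌊y / 2⌋ = 0 := by
    rw [Int.floor_eq_zero_iff]
    exact Set.mem_Ico.mpr ⟨by linarith [hy.1], by linarith [hy.2]⟩
  unfold fold
  rw [h0]
  push_cast
  rw [show y - 2 * 0 - 1 = -(1 - y) by ring, abs_neg, abs_of_nonneg (by linarith [hy.2])]
  ring

lemma measurable_fold : Measurable fold := by
  unfold fold
  have h : Measurable fun z : ℝ => ((⌊z / 2⌋ : ℤ) : ℝ) :=
    measurable_from_top.comp (Int.measurable_floor.comp (measurable_id.div_const 2))
  exact measurable_const.sub ((measurable_id.sub (h.const_mul 2)).sub measurable_const).abs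

section gaussDlemmas

variable {t : ℝ}

lemma gaussD_nonneg (ht : 0 < t) (x : ℝ) : 0 ≤ gaussD t x := by
  unfold gaussD
  have := Real.pi_pos
  positivity

lemma gaussD_anti (ht : 0 < t) {a b : ℝ} (h : |a| ≤ |b|) : gaussD t b ≤ gaussD t a := by
  unfold gaussD
  apply mul_le_mul_of_nonneg_left _ (by have := Real.pi_pos; positivity)
  apply Real.exp_le_exp.mpr
  have hsq : a ^ 2 ≤ b ^ 2 := by
    rw [← sq_abs a, ← sq_abs b]
    exact pow_le_pow_left₀ (abs_nonneg a) h 2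
  have h2t : (0:ℝ) < 2 * t := by linarith
  rw [div_le_div_iff₀ h2t h2t]
  nlinarith

lemma gaussD_even (x : ℝ) : gaussD t (-x) = gaussD t x := by
  unfold gaussD
  rw [show (-x) ^ 2 = x ^ 2 by ring]

lemma gaussD_integrable (ht : 0 < t) : Integrable (gaussD t) := by
  have hb : (0:ℝ) < 1 / (2 * t) := by positivity
  have h := (integrable_exp_neg_mul_sq hb).const_mul ((2 * Real.pi * t) ^ (-(1:ℝ)/2))
  have heq : gaussD t = fun x => (2 * Real.pi * t) ^ (-(1:ℝ)/2) * Real.exp (-(1 / (2 * t)) * x ^ 2) := by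
    funext x
    unfold gaussD
    congr 1
    ring_nf
  rw [heq]
  exact h

lemma gaussD_shift_integrable (ht : 0 < t) (c : ℝ) :
    Integrable (fun z => gaussD t (c - z)) := by
  have h := (gaussD_integrable ht).comp_sub_right c
  have heq : (fun z => gaussD t (c - z)) = fun z => gaussD t (z - c) := by
    funext z
    rw [show c - z = -(z - c) by ring, gaussD_even]
  rw [heq]
  exact h

lemma gaussD_continuous : Continuous (gaussD t) := by
  unfold gaussD
  fun_prop

lemma gaussD_zero : gaussD t 0 = (2 * Real.pi * t) ^ (-(1:ℝ)/2) := by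
  simp [gaussD]

end gaussDlemmas

/-- Left endpoints of the partition of `ℝ` into unit intervals, indexed by `ℤ × Bool`. -/
def EE : ℤ × Bool → ℤ := fun p => if p.2 then -2 * p.1 else -2 * p.1 - 1

lemma EE_true (n : ℤ) : EE (n, true) = -2 * n := rfl

lemma EE_false (n : ℤ) : EE (n, false) = -2 * n - 1 := rfl

lemma EE_inj : Function.Injective EE := by
  rintro ⟨m, a⟩ ⟨n, b⟩ h
  cases a <;> cases b <;>
    simp only [EE_true, EE_false, Prod.mk.injEq, and_true] at h ⊢ <;> omega

/-- Partition of `ℝ` into unit half-open intervals indexed by `ℤ × Bool`. -/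
def sI : ℤ × Bool → Set ℝ := fun p => Ioc ((EE p : ℝ)) ((EE p : ℝ) + 1)

lemma sI_meas (p : ℤ × Bool) : MeasurableSet (sI p) := measurableSet_Ioc

lemma sI_disj : Pairwise (Function.onFun Disjoint sI) := by
  intro p q hpq
  have hE : EE p ≠ EE q := fun h => hpq (EE_inj h)
  simp only [Function.onFun, sI]
  rw [Set.Ioc_disjoint_Ioc]
  rcases hE.lt_or_gt with h | h
  · have h1 : (EE p : ℝ) + 1 ≤ (EE q : ℝ) := by exact_mod_cast h
    exact le_trans (min_le_left _ _) (h1.trans (le_max_right _ _))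
  · have h1 : (EE q : ℝ) + 1 ≤ (EE p : ℝ) := by exact_mod_cast h
    exact le_trans (min_le_right _ _) (h1.trans (le_max_left _ _))

lemma sI_union : (⋃ p, sI p) = univ := by
  ext z
  simp only [mem_iUnion, mem_univ, iff_true]
  have hz1 : (⌈z⌉ : ℝ) - 1 < z := by
    have := Int.ceil_lt_add_one z; linarith
  have hz2 : z ≤ (⌈z⌉ : ℝ) := Int.le_ceil z
  rcases Int.even_or_odd ⌈z⌉ with ⟨m, hm⟩ | ⟨m, hm⟩
  · refine ⟨(-m, false), ?_⟩
    simp only [sI, EE_false, mem_Ioc]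
    have hE : (-2 * (-m) - 1 : ℤ) = ⌈z⌉ - 1 := by omega
    rw [hE]
    push_cast
    constructor <;> linarith
  · refine ⟨(-m, true), ?_⟩
    simp only [sI, EE_true, mem_Ioc]
    have hE : (-2 * (-m) : ℤ) = ⌈z⌉ - 1 := by omega
    rw [hE]
    push_cast
    constructor <;> linarith

lemma integral_Ioi_comp_add_right (g : ℝ → ℝ) (a c : ℝ) :
    ∫ u in Ioi a, g (u + c) = ∫ u in Ioi (a + c), g u := by
  have A : MeasurableEmbedding (fun u : ℝ => u + c) :=
    (Homeomorph.addRight c).isClosedEmbedding.measurableEmbedding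
  have h := A.setIntegral_map (μ := volume) g (Ioi (a + c))
  rw [map_add_right_eq_self volume c] at h
  have hpre : (fun u : ℝ => u + c) ⁻¹' Ioi (a + c) = Ioi a := by
    rw [Set.preimage_add_const_Ioi]
    congr 1
    ring
  rw [hpre] at h
  exact h.symm

lemma piece_true (t x : ℝ) (f : ℝ → ℝ) (n : ℤ) :
    ∫ z in sI (n, true), gaussD t (x - z) * f (fold z)
      = ∫ y in (0:ℝ)..1, gaussD t (x - y + 2 * (n:ℝ)) * f y := by
  have hle : ((EE (n, true) : ℝ)) ≤ (EE (n, true) : ℝ) + 1 := by linarith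
  rw [sI, ← intervalIntegral.integral_of_le hle]
  have hE : ((EE (n, true) : ℝ)) = 0 + -(2 * (n:ℝ)) := by
    rw [EE_true]; push_cast; ring
  rw [hE, show ((0:ℝ) + -(2 * (n:ℝ)) + 1) = 1 + -(2 * (n:ℝ)) by ring,
    ← intervalIntegral.integral_comp_add_right (fun z => gaussD t (x - z) * f (fold z))]
  apply intervalIntegral.integral_congr
  intro y hy
  rw [Set.uIcc_of_le (by norm_num : (0:ℝ) ≤ 1)] at hy
  have h1 : fold (y + -(2 * (n:ℝ))) = y := by
    rw [show y + -(2 * (n:ℝ)) = y + 2 * ((-n : ℤ) : ℝ) by push_cast; ring,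
      fold_add_two_int, fold_eq_self hy]
  show gaussD t (x - (y + -(2 * (n:ℝ)))) * f (fold (y + -(2 * (n:ℝ))))
      = gaussD t (x - y + 2 * (n:ℝ)) * f y
  rw [h1, show x - (y + -(2 * (n:ℝ))) = x - y + 2 * (n:ℝ) by ring]

lemma piece_false (t x : ℝ) (f : ℝ → ℝ) (n : ℤ) :
    ∫ z in sI (n, false), gaussD t (x - z) * f (fold z)
      = ∫ y in (0:ℝ)..1, gaussD t (x + y + 2 * (n:ℝ)) * f y := by
  have hle : ((EE (n, false) : ℝ)) ≤ (EE (n, false) : ℝ) + 1 := by linarith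
  rw [sI, ← intervalIntegral.integral_of_le hle]
  have hE : ((EE (n, false) : ℝ)) = -1 + -(2 * (n:ℝ)) := by
    rw [EE_false]; push_cast; ring
  rw [hE, show ((-1:ℝ) + -(2 * (n:ℝ)) + 1) = 0 + -(2 * (n:ℝ)) by ring,
    ← intervalIntegral.integral_comp_add_right (fun z => gaussD t (x - z) * f (fold z))]
  have hneg := intervalIntegral.integral_comp_neg (a := (0:ℝ)) (b := 1)
    (fun z => gaussD t (x - (z + -(2 * (n:ℝ)))) * f (fold (z + -(2 * (n:ℝ)))))
  rw [show (-(0:ℝ)) = 0 by norm_num] at hneg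
  rw [← hneg]
  apply intervalIntegral.integral_congr
  intro y hy
  rw [Set.uIcc_of_le (by norm_num : (0:ℝ) ≤ 1)] at hy
  have h1 : fold (-y + -(2 * (n:ℝ))) = y := by
    rw [show -y + -(2 * (n:ℝ)) = -(y + 2 * ((n : ℤ) : ℝ)) by push_cast; ring,
      fold_neg, fold_add_two_int, fold_eq_self hy]
  show gaussD t (x - (-y + -(2 * (n:ℝ)))) * f (fold (-y + -(2 * (n:ℝ))))
      = gaussD t (x + y + 2 * (n:ℝ)) * f y
  rw [h1, show x - (-y + -(2 * (n:ℝ))) = x + y + 2 * (n:ℝ) by ring]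

lemma hasSum_pieces {H : ℝ → ℝ} (hH : Integrable H) :
    HasSum (fun n : ℤ => (∫ z in sI (n, true), H z) + ∫ z in sI (n, false), H z)
      (∫ z, H z) := by
  have h := hasSum_integral_iUnion (μ := volume) (f := H) sI_meas sI_disj
    (by rw [sI_union]; exact hH.integrableOn)
  rw [sI_union, Measure.restrict_univ] at h
  exact h.prod_fiberwise fun n => by
    simpa [Fintype.sum_bool] using hasSum_fintype (fun b : Bool => ∫ z in sI (n, b), H z)

lemma piece_integrableOn {t : ℝ} (ht : 0 < t) (f : ℝ → ℝ) (hf : Measurable f) {M : ℝ}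
    (hM : ∀ y ∈ Icc (0:ℝ) 1, |f y| ≤ M) (g : ℝ → ℝ) (c : ℝ) (hg : Continuous g)
    (hgb : ∀ y, |g y| ≤ c) :
    IntegrableOn (fun y => g y * f y) (Ioc (0:ℝ) 1) volume := by
  apply Measure.integrableOn_of_bounded (M := c * M) measure_Ioc_lt_top.ne
    ((hg.measurable.mul hf).aestronglyMeasurable)
  refine (ae_restrict_iff' measurableSet_Ioc).mpr (ae_of_all _ fun y hy => ?_)
  rw [Real.norm_eq_abs, Pi.mul_apply, abs_mul]
  exact mul_le_mul (hgb y) (hM y (Ioc_subset_Icc_self hy)) (abs_nonneg _)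
    ((abs_nonneg _).trans (hgb y))

lemma sum_pieces {t : ℝ} (ht : 0 < t) (x : ℝ) (f : ℝ → ℝ) (hf : Measurable f) {M : ℝ}
    (hM : ∀ y ∈ Icc (0:ℝ) 1, |f y| ≤ M) (n : ℤ) :
    ∫ y in Ioc (0:ℝ) 1, (gaussD t (x - y + 2 * (n:ℝ)) + gaussD t (x + y + 2 * (n:ℝ))) * f y
      = (∫ z in sI (n, true), gaussD t (x - z) * f (fold z))
        + ∫ z in sI (n, false), gaussD t (x - z) * f (fold z) := by
  have hc1 : Continuous fun y : ℝ => gaussD t (x - y + 2 * (n:ℝ)) :=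
    gaussD_continuous.comp (by fun_prop)
  have hc2 : Continuous fun y : ℝ => gaussD t (x + y + 2 * (n:ℝ)) :=
    gaussD_continuous.comp (by fun_prop)
  have hb1 : ∀ y, |gaussD t (x - y + 2 * (n:ℝ))| ≤ gaussD t 0 := fun y => by
    rw [abs_of_nonneg (gaussD_nonneg ht _)]
    exact gaussD_anti ht (by simp)
  have hb2 : ∀ y, |gaussD t (x + y + 2 * (n:ℝ))| ≤ gaussD t 0 := fun y => by
    rw [abs_of_nonneg (gaussD_nonneg ht _)]
    exact gaussD_anti ht (by simp)
  have e1 := piece_integrableOn ht f hf hM _ _ hc1 hb1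
  have e2 := piece_integrableOn ht f hf hM _ _ hc2 hb2
  calc ∫ y in Ioc (0:ℝ) 1, (gaussD t (x - y + 2 * (n:ℝ)) + gaussD t (x + y + 2 * (n:ℝ))) * f y
      = ∫ y in Ioc (0:ℝ) 1,
          (gaussD t (x - y + 2 * (n:ℝ)) * f y + gaussD t (x + y + 2 * (n:ℝ)) * f y) := by
        simp only [add_mul]
    _ = (∫ y in Ioc (0:ℝ) 1, gaussD t (x - y + 2 * (n:ℝ)) * f y)
        + ∫ y in Ioc (0:ℝ) 1, gaussD t (x + y + 2 * (n:ℝ)) * f y := integral_add e1 e2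
    _ = (∫ z in sI (n, true), gaussD t (x - z) * f (fold z))
        + ∫ z in sI (n, false), gaussD t (x - z) * f (fold z) := by
        rw [← intervalIntegral.integral_of_le zero_le_one,
          ← intervalIntegral.integral_of_le zero_le_one, piece_true, piece_false]

lemma heat_repr {t : ℝ} (ht : 0 < t) (f : ℝ → ℝ) (hf : Measurable f) {M : ℝ}
    (hM : ∀ y ∈ Icc (0:ℝ) 1, |f y| ≤ M) (x : ℝ) :
    ∫ y in (0:ℝ)..1, heatK t x y * f y = ∫ z : ℝ, gaussD t (x - z) * f (fold z) := by
  have hM0 : (0:ℝ) ≤ M := (abs_nonneg _).trans (hM 0 ⟨le_rfl, zero_le_one⟩)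
  have hfold : Measurable fun z => f (fold z) := hf.comp measurable_fold
  have hGmeas : Measurable fun z => gaussD t (x - z) * f (fold z) :=
    (gaussD_continuous.measurable.comp (measurable_const.sub measurable_id)).mul hfold
  have hG'meas : Measurable fun z => gaussD t (x - z) * |f (fold z)| :=
    (gaussD_continuous.measurable.comp (measurable_const.sub measurable_id)).mul hfold.abs
  have hbound : Integrable (fun z => M * gaussD t (x - z)) :=
    (gaussD_shift_integrable ht x).const_mul M
  have hnorm : ∀ z : ℝ, ‖gaussD t (x - z) * f (fold z)‖ ≤ M * gaussD t (x - z) := fun z => by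
    rw [Real.norm_eq_abs, abs_mul, abs_of_nonneg (gaussD_nonneg ht _), mul_comm]
    exact mul_le_mul_of_nonneg_right (hM _ (fold_mem z)) (gaussD_nonneg ht _)
  have hGint : Integrable fun z => gaussD t (x - z) * f (fold z) :=
    hbound.mono' hGmeas.aestronglyMeasurable (ae_of_all _ hnorm)
  have hG'int : Integrable fun z => gaussD t (x - z) * |f (fold z)| :=
    hbound.mono' hG'meas.aestronglyMeasurable (ae_of_all _ fun z => by
      rw [Real.norm_eq_abs, abs_mul, abs_abs, abs_of_nonneg (gaussD_nonneg ht _)]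
      have := hnorm z
      rwa [Real.norm_eq_abs, abs_mul, abs_of_nonneg (gaussD_nonneg ht _)] at this)
  have hfabs : ∀ y ∈ Icc (0:ℝ) 1, |(|f y|)| ≤ M := fun y hy => by
    rw [abs_abs]; exact hM y hy
  -- sum over n of the pieces for |f|
  have hasG' := hasSum_pieces hG'int
  have hS'eq : ∀ n : ℤ,
      ∫ y in Ioc (0:ℝ) 1, (gaussD t (x - y + 2 * (n:ℝ)) + gaussD t (x + y + 2 * (n:ℝ))) * |f y|
        = (∫ z in sI (n, true), gaussD t (x - z) * |f (fold z)|)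
          + ∫ z in sI (n, false), gaussD t (x - z) * |f (fold z)| := fun n =>
    sum_pieces ht x (fun y => |f y|) hf.abs hfabs n
  -- integrability of each term on Ioc 0 1
  have hb : ∀ (c : ℝ) (s : ℝ), |gaussD t c| ≤ gaussD t 0 := fun c _ => by
    rw [abs_of_nonneg (gaussD_nonneg ht _)]
    exact gaussD_anti ht (by simp)
  have hInt : ∀ n : ℤ, IntegrableOn
      (fun y => (gaussD t (x - y + 2 * (n:ℝ)) + gaussD t (x + y + 2 * (n:ℝ))) * f y)
      (Ioc (0:ℝ) 1) volume := fun n => by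
    apply piece_integrableOn ht f hf hM _ (2 * gaussD t 0)
      ((gaussD_continuous.comp (by fun_prop)).add (gaussD_continuous.comp (by fun_prop)))
    intro y
    have h1 := hb (x - y + 2 * (n:ℝ)) 0
    have h2 := hb (x + y + 2 * (n:ℝ)) 0
    calc |gaussD t (x - y + 2 * (n:ℝ)) + gaussD t (x + y + 2 * (n:ℝ))|
        ≤ |gaussD t (x - y + 2 * (n:ℝ))| + |gaussD t (x + y + 2 * (n:ℝ))| := abs_add_le _ _
      _ ≤ 2 * gaussD t 0 := by linarith
  -- norm of the terms
  have hnormterm : ∀ (n : ℤ) (y : ℝ),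
      ‖(gaussD t (x - y + 2 * (n:ℝ)) + gaussD t (x + y + 2 * (n:ℝ))) * f y‖
        = (gaussD t (x - y + 2 * (n:ℝ)) + gaussD t (x + y + 2 * (n:ℝ))) * |f y| := by
    intro n y
    rw [Real.norm_eq_abs, abs_mul,
      abs_of_nonneg (add_nonneg (gaussD_nonneg ht _) (gaussD_nonneg ht _))]
  have hswap : ∫ y in Ioc (0:ℝ) 1,
        ∑' n : ℤ, (gaussD t (x - y + 2 * (n:ℝ)) + gaussD t (x + y + 2 * (n:ℝ))) * f y
      = ∑' n : ℤ, ∫ y in Ioc (0:ℝ) 1,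
          (gaussD t (x - y + 2 * (n:ℝ)) + gaussD t (x + y + 2 * (n:ℝ))) * f y := by
    apply integral_tsum
    · intro n
      exact (((gaussD_continuous.measurable.comp (by fun_prop)).add
        (gaussD_continuous.measurable.comp (by fun_prop))).mul hf).aestronglyMeasurable
    · have heq : ∀ n : ℤ, ∫⁻ y in Ioc (0:ℝ) 1,
          ‖(gaussD t (x - y + 2 * (n:ℝ)) + gaussD t (x + y + 2 * (n:ℝ))) * f y‖ₑ
          = ENNReal.ofReal ((∫ z in sI (n, true), gaussD t (x - z) * |f (fold z)|)
            + ∫ z in sI (n, false), gaussD t (x - z) * |f (fold z)|) := by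
        intro n
        rw [← ofReal_integral_norm_eq_lintegral_enorm (hInt n)]
        congr 1
        rw [← hS'eq n]
        exact setIntegral_congr_fun measurableSet_Ioc fun y _ => hnormterm n y
      rw [tsum_congr heq, ← ENNReal.ofReal_tsum_of_nonneg]
      · exact ENNReal.ofReal_ne_top
      · intro n
        rw [← hS'eq n, ← intervalIntegral.integral_of_le zero_le_one]
        apply intervalIntegral.integral_nonneg zero_le_one
        intro y _
        exact mul_nonneg (add_nonneg (gaussD_nonneg ht _) (gaussD_nonneg ht _)) (abs_nonneg _)
      · exact hasG'.summable
  calc ∫ y in (0:ℝ)..1, heatK t x y * f y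
      = ∫ y in Ioc (0:ℝ) 1,
          ∑' n : ℤ, (gaussD t (x - y + 2 * (n:ℝ)) + gaussD t (x + y + 2 * (n:ℝ))) * f y := by
        rw [intervalIntegral.integral_of_le zero_le_one]
        congr 1
        funext y
        rw [heatK, ← tsum_mul_right]
    _ = ∑' n : ℤ, ∫ y in Ioc (0:ℝ) 1,
          (gaussD t (x - y + 2 * (n:ℝ)) + gaussD t (x + y + 2 * (n:ℝ))) * f y := hswap
    _ = ∑' n : ℤ, ((∫ z in sI (n, true), gaussD t (x - z) * f (fold z))
          + ∫ z in sI (n, false), gaussD t (x - z) * f (fold z)) :=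
        tsum_congr fun n => sum_pieces ht x f hf hM n
    _ = ∫ z : ℝ, gaussD t (x - z) * f (fold z) := (hasSum_pieces hGint).tsum_eq

lemma integral_Ioc_gauss_le {t : ℝ} (ht : 0 < t) {a b : ℝ} (hab : a ≤ b) :
    ∫ u in Ioc a b, gaussD t u ≤ gaussD t 0 * (b - a) := by
  have h := norm_setIntegral_le_of_norm_le_const (μ := volume) (s := Ioc a b)
    (f := gaussD t) (C := gaussD t 0) measure_Ioc_lt_top
    (fun u _ => by
      rw [Real.norm_eq_abs, abs_of_nonneg (gaussD_nonneg ht _)]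
      exact gaussD_anti ht (by simp))
  rw [measureReal_def, Real.volume_Ioc, ENNReal.toReal_ofReal (by linarith)] at h
  exact (le_abs_self _).trans ((Real.norm_eq_abs _ ▸ h))

lemma gauss_Iic_shift {t : ℝ} (m c : ℝ) :
    ∫ z in Iic m, gaussD t (c - z) = ∫ u in Ioi (c - m), gaussD t u := by
  have h1 : ∫ z in Iic m, gaussD t (c - z)
      = ∫ z in Iic m, (fun u => gaussD t (u + c)) (-z) := by
    apply setIntegral_congr_fun measurableSet_Iic
    intro z _
    simp only
    rw [show -z + c = c - z by ring]
  have h2 := integral_comp_neg_Iic m (fun u => gaussD t (u + c))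
  rw [h1, h2, integral_Ioi_comp_add_right, show -m + c = c - m by ring]

lemma gauss_Ioi_shift {t : ℝ} (m c : ℝ) :
    ∫ z in Ioi m, gaussD t (c - z) = ∫ u in Ioi (m - c), gaussD t u := by
  have h1 : ∫ z in Ioi m, gaussD t (c - z)
      = ∫ z in Ioi m, (fun u => gaussD t u) (z + -c) := by
    apply setIntegral_congr_fun measurableSet_Ioi
    intro z _
    simp only
    rw [show z + -c = -(c - z) by ring, gaussD_even]
  rw [h1, integral_Ioi_comp_add_right, show m + -c = m - c by ring]

lemma gauss_diff_integral {t : ℝ} (ht : 0 < t) {x x' : ℝ} (h : x' ≤ x) :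
    ∫ z : ℝ, |gaussD t (x - z) - gaussD t (x' - z)|
      ≤ 2 * gaussD t 0 * (x - x') := by
  set m := (x + x') / 2 with hm
  have hIx : Integrable (fun z => gaussD t (x - z)) := gaussD_shift_integrable ht x
  have hIx' : Integrable (fun z => gaussD t (x' - z)) := gaussD_shift_integrable ht x'
  have habs : Integrable (fun z => |gaussD t (x - z) - gaussD t (x' - z)|) := (hIx.sub hIx').abs
  have hgI : Integrable (gaussD t) := gaussD_integrable ht
  -- the common tail difference
  have key : ∀ a b : ℝ, a ≤ b →
      (∫ u in Ioi a, gaussD t u) - ∫ u in Ioi b, gaussD t u ≤ gaussD t 0 * (b - a) := by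
    intro a b hab
    have hsplit : ∫ u in Ioi a, gaussD t u
        = (∫ u in Ioc a b, gaussD t u) + ∫ u in Ioi b, gaussD t u := by
      rw [← setIntegral_union (Set.Ioc_disjoint_Ioi le_rfl) measurableSet_Ioi
        hgI.integrableOn hgI.integrableOn, Set.Ioc_union_Ioi_eq_Ioi hab]
    rw [hsplit]
    simpa using integral_Ioc_gauss_le ht hab
  have hd2 : x' - m ≤ x - m := by linarith
  -- split the integral at m
  rw [← intervalIntegral.integral_Iic_add_Ioi habs.integrableOn habs.integrableOn]
  have hIic : ∫ z in Iic m, |gaussD t (x - z) - gaussD t (x' - z)|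
      = (∫ z in Iic m, gaussD t (x' - z)) - ∫ z in Iic m, gaussD t (x - z) := by
    rw [← integral_sub hIx'.integrableOn hIx.integrableOn]
    apply setIntegral_congr_fun measurableSet_Iic
    intro z hz
    have hz' : z ≤ m := hz
    have h1 : |x' - z| ≤ |x - z| := by
      rw [abs_of_nonneg (by simp only [hm] at hz' ⊢; linarith : (0:ℝ) ≤ x - z)]
      exact abs_le.mpr ⟨by simp only [hm] at hz'; linarith, by linarith⟩
    have h2 : gaussD t (x - z) ≤ gaussD t (x' - z) := gaussD_anti ht h1
    show |gaussD t (x - z) - gaussD t (x' - z)| = gaussD t (x' - z) - gaussD t (x - z)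
    rw [abs_of_nonpos (by linarith)]
    ring
  have hIoi : ∫ z in Ioi m, |gaussD t (x - z) - gaussD t (x' - z)|
      = (∫ z in Ioi m, gaussD t (x - z)) - ∫ z in Ioi m, gaussD t (x' - z) := by
    rw [← integral_sub hIx.integrableOn hIx'.integrableOn]
    apply setIntegral_congr_fun measurableSet_Ioi
    intro z hz
    have hz' : m < z := hz
    have h1 : |x - z| ≤ |x' - z| := by
      rw [abs_of_nonpos (by simp only [hm] at hz' ⊢; linarith : x' - z ≤ (0:ℝ)), abs_sub_comm]
      exact abs_le.mpr ⟨by linarith, by simp only [hm] at hz'; linarith⟩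
    have h2 : gaussD t (x' - z) ≤ gaussD t (x - z) := gaussD_anti ht h1
    show |gaussD t (x - z) - gaussD t (x' - z)| = gaussD t (x - z) - gaussD t (x' - z)
    rw [abs_of_nonneg (by linarith)]
  rw [hIic, hIoi, gauss_Iic_shift, gauss_Iic_shift, gauss_Ioi_shift, gauss_Ioi_shift]
  have k1 := key (x' - m) (x - m) hd2
  have k2 := key (m - x) (m - x') (by linarith)
  have e1 : x - m - (x' - m) = x - x' := by ring
  have e2 : m - x' - (m - x) = x - x' := by ring
  rw [e1] at k1
  rw [e2] at k2
  linarith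

lemma G_integrable {t : ℝ} (ht : 0 < t) (f : ℝ → ℝ) (hf : Measurable f) {M : ℝ}
    (hM : ∀ y ∈ Icc (0:ℝ) 1, |f y| ≤ M) (x : ℝ) :
    Integrable (fun z => gaussD t (x - z) * f (fold z)) := by
  have hfold : Measurable fun z => f (fold z) := hf.comp measurable_fold
  have hGmeas : Measurable fun z => gaussD t (x - z) * f (fold z) :=
    (gaussD_continuous.measurable.comp (measurable_const.sub measurable_id)).mul hfold
  have hbound : Integrable (fun z => M * gaussD t (x - z)) :=
    (gaussD_shift_integrable ht x).const_mul M
  exact hbound.mono' hGmeas.aestronglyMeasurable (ae_of_all _ fun z => by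
    rw [Real.norm_eq_abs, abs_mul, abs_of_nonneg (gaussD_nonneg ht _), mul_comm]
    exact mul_le_mul_of_nonneg_right (hM _ (fold_mem z)) (gaussD_nonneg ht _))



/-- smoothing estimate for the Neumann heat semigroup:
`|P_t f(x) − P_t f(x')| ≤ C t^{-1/2} ‖f‖_∞ |x − x'|` for `t ∈ (0,1]`. -/
theorem heat_semigroup_smoothing_estimate :
    ∃ C > (0:ℝ), ∀ f : ℝ → ℝ, Measurable f → ∀ M : ℝ,
      (∀ y ∈ Set.Icc (0:ℝ) 1, |f y| ≤ M) →
      ∀ t ∈ Set.Ioc (0:ℝ) 1, ∀ x ∈ Set.Icc (0:ℝ) 1, ∀ x' ∈ Set.Icc (0:ℝ) 1,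
        |Pt t f x - Pt t f x'| ≤ C * t ^ (-(1:ℝ)/2) * M * |x - x'| := by
  refine ⟨2, by norm_num, ?_⟩
  intro f hf M hM t ht x _ x' _
  have ht0 : 0 < t := ht.1
  have hM0 : (0:ℝ) ≤ M := (abs_nonneg _).trans (hM 0 ⟨le_rfl, zero_le_one⟩)
  have hrpow0 : (0:ℝ) ≤ t ^ (-(1:ℝ)/2) := Real.rpow_nonneg ht0.le _
  have hg0 : gaussD t 0 ≤ t ^ (-(1:ℝ)/2) := by
    rw [gaussD_zero]
    exact Real.rpow_le_rpow_of_nonpos ht0 (by nlinarith [Real.pi_gt_three, ht0]) (by norm_num)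
  have key : ∀ a b : ℝ, b ≤ a →
      |Pt t f a - Pt t f b| ≤ 2 * t ^ (-(1:ℝ)/2) * M * |a - b| := by
    intro a b hba
    have hIa := G_integrable ht0 f hf hM a
    have hIb := G_integrable ht0 f hf hM b
    have hPa : Pt t f a = ∫ z : ℝ, gaussD t (a - z) * f (fold z) := by
      rw [Pt, if_neg ht0.ne', heat_repr ht0 f hf hM a]
    have hPb : Pt t f b = ∫ z : ℝ, gaussD t (b - z) * f (fold z) := by
      rw [Pt, if_neg ht0.ne', heat_repr ht0 f hf hM b]
    have hdiff : ∀ z : ℝ, gaussD t (a - z) * f (fold z) - gaussD t (b - z) * f (fold z)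
        = (gaussD t (a - z) - gaussD t (b - z)) * f (fold z) := fun z => by ring
    have hint1 : Integrable (fun z => (gaussD t (a - z) - gaussD t (b - z)) * f (fold z)) :=
      (hIa.sub hIb).congr (ae_of_all _ fun z => hdiff z)
    have hint2 : Integrable (fun z => |gaussD t (a - z) - gaussD t (b - z)| * M) :=
      (((gaussD_shift_integrable ht0 a).sub (gaussD_shift_integrable ht0 b)).abs).mul_const M
    rw [hPa, hPb, ← integral_sub hIa hIb]
    have hint1' : Integrable (fun z => |gaussD t (a - z) - gaussD t (b - z)| * |f (fold z)|) :=
      hint1.abs.congr (ae_of_all _ fun z => by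
        show |(gaussD t (a - z) - gaussD t (b - z)) * f (fold z)|
            = |gaussD t (a - z) - gaussD t (b - z)| * |f (fold z)|
        rw [abs_mul])
    calc |∫ z : ℝ, (gaussD t (a - z) * f (fold z) - gaussD t (b - z) * f (fold z))|
        ≤ ∫ z : ℝ, |gaussD t (a - z) - gaussD t (b - z)| * |f (fold z)| := by
          simp only [hdiff]
          simpa [Real.norm_eq_abs, abs_mul] using
            norm_integral_le_integral_norm (μ := volume)
              (f := fun z => (gaussD t (a - z) - gaussD t (b - z)) * f (fold z))
      _ ≤ ∫ z : ℝ, |gaussD t (a - z) - gaussD t (b - z)| * M := by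
          apply integral_mono hint1' hint2
          intro z
          show |gaussD t (a - z) - gaussD t (b - z)| * |f (fold z)|
              ≤ |gaussD t (a - z) - gaussD t (b - z)| * M
          exact mul_le_mul_of_nonneg_left (hM _ (fold_mem z)) (abs_nonneg _)
      _ = (∫ z : ℝ, |gaussD t (a - z) - gaussD t (b - z)|) * M := integral_mul_const M _
      _ ≤ (2 * gaussD t 0 * (a - b)) * M :=
          mul_le_mul_of_nonneg_right (gauss_diff_integral ht0 hba) hM0
      _ ≤ 2 * t ^ (-(1:ℝ)/2) * M * |a - b| := by
          rw [abs_of_nonneg (by linarith)]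
          nlinarith [gaussD_nonneg ht0 0, mul_nonneg hM0 (sub_nonneg.mpr hba)]
  rcases le_total x' x with hc | hc
  · exact key x x' hc
  · rw [abs_sub_comm, abs_sub_comm x x']
    exact key x' x hc
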